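/- Let λ₀^{AB} and λ₀^B denote the largest eigenvalues of ψ^{AB} and ψ^B respectively. If the majorization (𝟙_K/K) ⊗ ψ^B ≺ (𝟙_L/L) ⊗ ψ^{AB} holds, then log₂K − log₂L ≥ log₂(1/λ₀^{AB}) − log₂(1/λ₀^B). -/

import Mathlib

open Matrix Kronecker Finset
open scoped ComplexConjugate Classical ComplexOrder

noncomputable section

/-- Density matrix (outer product) of a vector. -/
def dmv {n : Type*} (v : n → ℂ) : Matrix n n ℂ :=
  Matrix.of fun i j => v i * conj (v j)

/-- Outer product `|u⟩⟨v|`. -/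
def outer {n : Type*} (u v : n → ℂ) : Matrix n n ℂ :=
  Matrix.of fun i j => u i * conj (v j)

/-- Largest eigenvalue of a (Hermitian) matrix. -/
def maxEig {n : Type*} [Fintype n] [DecidableEq n] (A : Matrix n n ℂ) : ℝ :=
  if h : A.IsHermitian then ⨆ i, h.eigenvalues i else 0

/-- Sum of the `k` largest eigenvalues of a Hermitian matrix. -/
def topSum {n : Type*} [Fintype n] [DecidableEq n] (A : Matrix n n ℂ) (k : ℕ) : ℝ :=
  if h : A.IsHermitian then
    sSup {x : ℝ | ∃ s : Finset n, s.card = k ∧ x = ∑ i ∈ s, h.eigenvalues i}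
  else 0

/-- Majorization of Hermitian operators: `A ≺ B` (possibly on different spaces):
every partial sum of the `k` largest eigenvalues of `A` is at most that of `B`,
and the traces agree. -/
def Maj {m n : Type*} [Fintype m] [DecidableEq m] [Fintype n] [DecidableEq n]
    (A : Matrix m m ℂ) (B : Matrix n n ℂ) : Prop :=
  (∀ k : ℕ, topSum A k ≤ topSum B k) ∧ A.trace = B.trace

/-- Total matrix square root: the positive square root for PSD matrices, `0` otherwise. -/
def msqrt {n : Type*} [Fintype n] [DecidableEq n] (A : Matrix n n ℂ) : Matrix n n ℂ :=
  if h : A.PosSemidef then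
    (h.1.eigenvectorUnitary : Matrix n n ℂ) *
      Matrix.diagonal (fun i => ((Real.sqrt (h.1.eigenvalues i) : ℝ) : ℂ)) *
      (star h.1.eigenvectorUnitary : Matrix n n ℂ)
  else 0

/-- Trace norm (sum of singular values). -/
def traceNorm {n : Type*} [Fintype n] [DecidableEq n] (A : Matrix n n ℂ) : ℝ :=
  ((msqrt (Aᴴ * A)).trace).re

/-- Fidelity `F(ρ,σ) = ‖√ρ √σ‖₁`. -/
def fid {n : Type*} [Fintype n] [DecidableEq n] (ρ σ : Matrix n n ℂ) : ℝ :=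
  traceNorm (msqrt ρ * msqrt σ)

/-- Purified distance `P(ρ,σ) = √(1 − F²(ρ,σ))`. -/
def pd {n : Type*} [Fintype n] [DecidableEq n] (ρ σ : Matrix n n ℂ) : ℝ :=
  Real.sqrt (1 - fid ρ σ ^ 2)

/-- Choi matrix of a map on matrices. -/
def choi {m n : Type*} [Fintype m] [DecidableEq m]
    (N : Matrix m m ℂ → Matrix n n ℂ) : Matrix (m × n) (m × n) ℂ :=
  Matrix.of fun p q => N (Matrix.single p.1 q.1 1) p.2 q.2

/-- A map is mixed-unitary if it is a convex combination of unitary conjugations. -/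
def IsMixedUnitary {n : Type*} [Fintype n] [DecidableEq n]
    (N : Matrix n n ℂ → Matrix n n ℂ) : Prop :=
  ∃ (m : ℕ) (p : Fin m → ℝ) (U : Fin m → Matrix n n ℂ),
    (∀ i, 0 ≤ p i) ∧ (∑ i, p i = 1) ∧ (∀ i, U i ∈ Matrix.unitaryGroup n ℂ) ∧
    ∀ ρ, N ρ = ∑ i, (p i : ℂ) • (U i * ρ * (U i)ᴴ)

/-- `id_R ⊗ M` acting blockwise on a matrix on `R × S`. -/
def idTensor {R S T : Type*} (M : Matrix S S ℂ →ₗ[ℂ] Matrix T T ℂ)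
    (ρ : Matrix (R × S) (R × S) ℂ) : Matrix (R × T) (R × T) ℂ :=
  Matrix.of fun p q => M (Matrix.of fun s s' => ρ (p.1, s) (q.1, s')) p.2 q.2

end

section AuxLemmas

lemma maxEig_eq' {n : Type*} [Fintype n] [DecidableEq n] {A : Matrix n n ℂ}
    (h : A.IsHermitian) : maxEig A = ⨆ i, h.eigenvalues i := dif_pos h

lemma eigenvalues_le_maxEig' {n : Type*} [Fintype n] [DecidableEq n] [Nonempty n]
    {A : Matrix n n ℂ} (h : A.IsHermitian) (i : n) : h.eigenvalues i ≤ maxEig A := by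
  rw [maxEig_eq' h]
  exact le_ciSup (Set.Finite.bddAbove (Set.finite_range _)) i

lemma topSum_one_eq_maxEig' {n : Type*} [Fintype n] [DecidableEq n] [Nonempty n]
    {A : Matrix n n ℂ} (h : A.IsHermitian) : topSum A 1 = maxEig A := by
  rw [topSum, dif_pos h, maxEig_eq' h]
  have : {x : ℝ | ∃ s : Finset n, s.card = 1 ∧ x = ∑ i ∈ s, h.eigenvalues i}
      = Set.range h.eigenvalues := by
    ext x
    simp only [Set.mem_setOf_eq, Set.mem_range]
    constructor
    · rintro ⟨s, hs, rfl⟩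
      obtain ⟨i, rfl⟩ := Finset.card_eq_one.mp hs
      exact ⟨i, (Finset.sum_singleton _ _).symm⟩
    · rintro ⟨i, rfl⟩
      exact ⟨{i}, Finset.card_singleton i, (Finset.sum_singleton _ _).symm⟩
  rw [this, sSup_range]

lemma maxEig_smul_one_sub_psd' {n : Type*} [Fintype n] [DecidableEq n] [Nonempty n]
    {A : Matrix n n ℂ} (hA : A.IsHermitian) :
    (((maxEig A : ℂ)) • (1 : Matrix n n ℂ) - A).PosSemidef := by
  set U := (hA.eigenvectorUnitary : Matrix n n ℂ) with hUdef
  have hU : U * Uᴴ = 1 := by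
    rw [← Matrix.star_eq_conjTranspose]
    exact (Matrix.mem_unitaryGroup_iff).mp hA.eigenvectorUnitary.2
  have key : ((maxEig A : ℂ)) • (1 : Matrix n n ℂ) - A
      = U * (Matrix.diagonal fun i => ((maxEig A - hA.eigenvalues i : ℝ) : ℂ)) * Uᴴ := by
    have hdiag : (Matrix.diagonal fun i => ((maxEig A - hA.eigenvalues i : ℝ) : ℂ))
        = (maxEig A : ℂ) • (1 : Matrix n n ℂ)
          - Matrix.diagonal (RCLike.ofReal ∘ hA.eigenvalues) := by
      rw [Matrix.smul_one_eq_diagonal, Matrix.diagonal_sub]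
      congr 1
      ext i
      simp [Function.comp, Complex.ofReal_sub]
    rw [hdiag, Matrix.mul_sub, Matrix.sub_mul, Matrix.mul_smul, mul_one, Matrix.smul_mul, hU]
    congr 1
    conv_lhs => rw [hA.spectral_theorem]
    rw [Unitary.conjStarAlgAut_apply, Matrix.star_eq_conjTranspose]
  rw [key]
  refine (Matrix.posSemidef_diagonal_iff.mpr fun i => ?_).mul_mul_conjTranspose_same _
  rw [Complex.zero_le_real, sub_nonneg]
  exact eigenvalues_le_maxEig' hA i

lemma rayleigh_le' {n : Type*} [Fintype n] [DecidableEq n] [Nonempty n]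
    {A : Matrix n n ℂ} (hA : A.IsHermitian) (x : n → ℂ) :
    (star x ⬝ᵥ (A *ᵥ x)).re ≤ maxEig A * (star x ⬝ᵥ x).re := by
  have h := (maxEig_smul_one_sub_psd' hA).dotProduct_mulVec_nonneg x
  rw [Matrix.sub_mulVec, Matrix.smul_mulVec, Matrix.one_mulVec, dotProduct_sub,
    dotProduct_smul] at h
  have h2 := (Complex.le_def.mp h).1
  simp only [Complex.zero_re, Complex.sub_re, smul_eq_mul, Complex.mul_re,
    Complex.ofReal_re, Complex.ofReal_im, zero_mul, sub_zero] at h2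
  linarith

lemma dot_split' {m n : Type*} [Fintype m] [Fintype n] (v : m × n → ℂ) :
    star v ⬝ᵥ v = ∑ l : m, (star (fun x => v (l, x)) ⬝ᵥ fun x => v (l, x)) := by
  simp [dotProduct, Fintype.sum_prod_type]

lemma dot_kron_smul_one' {m n : Type*} [Fintype m] [DecidableEq m] [Fintype n]
    (c : ℂ) (A : Matrix n n ℂ) (v : m × n → ℂ) :
    star v ⬝ᵥ (((c • (1 : Matrix m m ℂ)) ⊗ₖ A) *ᵥ v)
      = c * ∑ l : m, (star (fun x => v (l, x)) ⬝ᵥ (A *ᵥ fun x => v (l, x))) := by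
  have hmv : ∀ (l : m) (x : n), ((((c • (1 : Matrix m m ℂ)) ⊗ₖ A) *ᵥ v) (l, x))
      = c * ((A *ᵥ fun y => v (l, y)) x) := by
    intro l x
    simp only [mulVec, dotProduct, Fintype.sum_prod_type, kroneckerMap_apply,
      Matrix.smul_apply, Matrix.one_apply, smul_eq_mul, mul_ite, mul_one, mul_zero,
      ite_mul, zero_mul]
    have hpull : ∀ l' : m, (∑ y : n, if l = l' then c * A x y * v (l', y) else 0)
        = if l = l' then ∑ y : n, c * A x y * v (l', y) else 0 := fun l' => by
      split <;> simp
    simp_rw [hpull, Finset.sum_ite_eq, Finset.mem_univ, if_true]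
    simp [Finset.mul_sum, mul_assoc]
  calc star v ⬝ᵥ (((c • (1 : Matrix m m ℂ)) ⊗ₖ A) *ᵥ v)
      = ∑ l : m, ∑ x : n, star (v (l, x)) * (c * ((A *ᵥ fun y => v (l, y)) x)) := by
        simp only [dotProduct, Fintype.sum_prod_type, Pi.star_apply]
        exact Finset.sum_congr rfl fun l _ => Finset.sum_congr rfl fun x _ => by rw [hmv]
    _ = c * ∑ l : m, (star (fun x => v (l, x)) ⬝ᵥ (A *ᵥ fun x => v (l, x))) := by
        simp only [dotProduct, Pi.star_apply, Finset.mul_sum]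
        exact Finset.sum_congr rfl fun l _ => Finset.sum_congr rfl fun x _ => by ring

lemma kron_isHermitian' {m n : Type*} [Fintype m] [Fintype n]
    {A : Matrix m m ℂ} {B : Matrix n n ℂ} (hA : A.IsHermitian) (hB : B.IsHermitian) :
    (A ⊗ₖ B).IsHermitian := by
  ext ⟨i, j⟩ ⟨i', j'⟩
  simp only [conjTranspose_apply, kroneckerMap_apply, star_mul']
  rw [← Matrix.conjTranspose_apply A, ← Matrix.conjTranspose_apply B, hA, hB, mul_comm]

lemma smul_one_isHermitian' {m : Type*} [Fintype m] [DecidableEq m] (c : ℝ) :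
    (((c : ℂ)) • (1 : Matrix m m ℂ)).IsHermitian := by
  unfold Matrix.IsHermitian
  rw [Matrix.conjTranspose_smul, Matrix.conjTranspose_one]
  simp [Complex.star_def, Complex.conj_ofReal]

lemma eigvec_norm_one {n : Type*} [Fintype n] [DecidableEq n] {A : Matrix n n ℂ}
    (hA : A.IsHermitian) (i : n) :
    star ⇑(hA.eigenvectorBasis i) ⬝ᵥ ⇑(hA.eigenvectorBasis i) = 1 := by
  have h := (orthonormal_iff_ite.mp hA.eigenvectorBasis.orthonormal) i i
  rw [EuclideanSpace.inner_eq_star_dotProduct] at h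
  rw [dotProduct_comm]
  simpa using h

lemma maxEig_pos_of_trace' {ι : Type*} [Fintype ι] [DecidableEq ι] [Nonempty ι]
    {M : Matrix ι ι ℂ} (hM : M.IsHermitian) (h : ∑ p, (M p p).re = 1) : 0 < maxEig M := by
  obtain ⟨p, hp⟩ : ∃ p, 0 < (M p p).re := by
    by_contra hc
    push_neg at hc
    have h0 : ∑ p, (M p p).re ≤ 0 := Finset.sum_nonpos fun p _ => hc p
    linarith
  set v : ι → ℂ := fun q => if q = p then 1 else 0 with hv
  have h1 : (star v ⬝ᵥ (M *ᵥ v)).re = (M p p).re := by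
    simp [hv, dotProduct, mulVec, apply_ite, mul_ite, ite_mul, Finset.sum_ite_eq',
      Finset.sum_ite_eq]
  have h2 : (star v ⬝ᵥ v).re = 1 := by
    simp [hv, dotProduct, apply_ite, mul_ite, ite_mul, Finset.sum_ite_eq']
  have h3 := rayleigh_le' hM v
  rw [h1, h2, mul_one] at h3
  linarith

lemma maxEig_kron_le' {m n : Type*} [Fintype m] [DecidableEq m] [Nonempty m]
    [Fintype n] [DecidableEq n] [Nonempty n]
    (c : ℝ) (hc : 0 ≤ c) {A : Matrix n n ℂ} (hA : A.IsHermitian)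
    (hker : (((c : ℂ) • (1 : Matrix m m ℂ)) ⊗ₖ A).IsHermitian) :
    maxEig (((c : ℂ) • (1 : Matrix m m ℂ)) ⊗ₖ A) ≤ c * maxEig A := by
  rw [maxEig_eq' hker]
  refine ciSup_le fun i => ?_
  have hval := hker.eigenvalues_eq i
  set u : m × n → ℂ := ⇑(hker.eigenvectorBasis i) with hu
  have hnorm : star u ⬝ᵥ u = 1 := eigvec_norm_one hker i
  rw [hval]
  have hre : RCLike.re (star u ⬝ᵥ ((((c : ℂ) • (1 : Matrix m m ℂ)) ⊗ₖ A) *ᵥ u))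
      = (star u ⬝ᵥ ((((c : ℂ) • (1 : Matrix m m ℂ)) ⊗ₖ A) *ᵥ u)).re := rfl
  rw [hre, dot_kron_smul_one']
  rw [Complex.re_ofReal_mul]
  have hsum1 : ∑ l : m, (star (fun x => u (l, x)) ⬝ᵥ fun x => u (l, x)).re = 1 := by
    have := congrArg Complex.re (dot_split' u)
    rw [hnorm] at this
    simpa [Complex.re_sum] using this.symm
  have hterm : (∑ l : m, (star (fun x => u (l, x)) ⬝ᵥ (A *ᵥ fun x => u (l, x)))).re
      ≤ maxEig A := by
    rw [Complex.re_sum]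
    calc ∑ l : m, (star (fun x => u (l, x)) ⬝ᵥ (A *ᵥ fun x => u (l, x))).re
        ≤ ∑ l : m, maxEig A * (star (fun x => u (l, x)) ⬝ᵥ fun x => u (l, x)).re :=
          Finset.sum_le_sum fun l _ => rayleigh_le' hA _
      _ = maxEig A := by rw [← Finset.mul_sum, hsum1, mul_one]
  exact mul_le_mul_of_nonneg_left hterm hc

lemma le_maxEig_kron' {m n : Type*} [Fintype m] [DecidableEq m] [Nonempty m]
    [Fintype n] [DecidableEq n] [Nonempty n]
    (c : ℝ) {A : Matrix n n ℂ} (hA : A.IsHermitian)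
    (hker : (((c : ℂ) • (1 : Matrix m m ℂ)) ⊗ₖ A).IsHermitian) :
    c * maxEig A ≤ maxEig (((c : ℂ) • (1 : Matrix m m ℂ)) ⊗ₖ A) := by
  obtain ⟨iB, hiB⟩ := exists_eq_ciSup_of_finite (f := hA.eigenvalues)
  set w : n → ℂ := ⇑(hA.eigenvectorBasis iB) with hw
  have hwnorm : star w ⬝ᵥ w = 1 := eigvec_norm_one hA iB
  have hwvec : A *ᵥ w = hA.eigenvalues iB • w := hA.mulVec_eigenvectorBasis iB
  have i0 : m := Classical.arbitrary m
  set u : m × n → ℂ := fun p => if p.1 = i0 then w p.2 else 0 with hu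
  have hterm1 : ∀ k : m, (star (fun x => u (k, x)) ⬝ᵥ fun x => u (k, x))
      = if k = i0 then star w ⬝ᵥ w else 0 := fun k => by
    by_cases hk : k = i0 <;> simp [hu, hk, dotProduct]
  have hterm2 : ∀ k : m, (star (fun x => u (k, x)) ⬝ᵥ (A *ᵥ fun x => u (k, x)))
      = if k = i0 then star w ⬝ᵥ (A *ᵥ w) else 0 := fun k => by
    by_cases hk : k = i0 <;> simp [hu, hk, dotProduct, mulVec]
  have hj := rayleigh_le' hker u
  have e1 : star u ⬝ᵥ ((((c : ℂ) • (1 : Matrix m m ℂ)) ⊗ₖ A) *ᵥ u)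
      = (c : ℂ) * ((hA.eigenvalues iB : ℝ) : ℂ) := by
    rw [dot_kron_smul_one']
    simp_rw [hterm2, Finset.sum_ite_eq', Finset.mem_univ, if_true]
    rw [hwvec]
    rw [dotProduct_smul, hwnorm]
    simp [Complex.real_smul]
  have e2 : star u ⬝ᵥ u = 1 := by
    rw [dot_split']
    simp_rw [hterm1, Finset.sum_ite_eq', Finset.mem_univ, if_true]
    exact hwnorm
  rw [e1, e2] at hj
  simp only [Complex.one_re, mul_one] at hj
  have hj2 : c * hA.eigenvalues iB ≤ maxEig (((c : ℂ) • (1 : Matrix m m ℂ)) ⊗ₖ A) := by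
    have : ((c : ℂ) * ((hA.eigenvalues iB : ℝ) : ℂ)).re = c * hA.eigenvalues iB := by
      rw [← Complex.ofReal_mul, Complex.ofReal_re]
    rwa [this] at hj
  rwa [maxEig_eq' hA, ← hiB]

end AuxLemmas
/-- the majorization between resource-extended states implies the
entanglement-cost bound in terms of the largest eigenvalues of `ψ^{AB}` and `ψ^B`. -/
theorem stmt12 {At Bt : Type*} [Fintype At] [DecidableEq At] [Fintype Bt] [DecidableEq Bt]
    [Nonempty At] [Nonempty Bt]
    (ψAB : Matrix (At × Bt) (At × Bt) ℂ) (hψ : ψAB.PosSemidef) (hψ1 : ψAB.trace = 1)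
    (K L : ℕ) (hK : 0 < K) (hL : 0 < L)
    (hmaj : Maj
      (((K : ℂ)⁻¹ • (1 : Matrix (Fin K) (Fin K) ℂ)) ⊗ₖ
        (Matrix.of fun b b' : Bt => ∑ a, ψAB (a, b) (a, b')))
      (((L : ℂ)⁻¹ • (1 : Matrix (Fin L) (Fin L) ℂ)) ⊗ₖ ψAB)) :
    Real.logb 2 K - Real.logb 2 L ≥
      Real.logb 2 (maxEig ψAB)⁻¹ -
        Real.logb 2 (maxEig (Matrix.of fun b b' : Bt => ∑ a, ψAB (a, b) (a, b')))⁻¹ := by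
  classical
  haveI : Nonempty (Fin K) := Fin.pos_iff_nonempty.mp hK
  haveI : Nonempty (Fin L) := Fin.pos_iff_nonempty.mp hL
  set ψB : Matrix Bt Bt ℂ := (Matrix.of fun b b' : Bt => ∑ a, ψAB (a, b) (a, b')) with hψBdef
  have hermAB : ψAB.IsHermitian := hψ.1
  have hermB : ψB.IsHermitian := by
    ext b b'
    simp only [hψBdef, conjTranspose_apply, Matrix.of_apply, star_sum]
    exact Finset.sum_congr rfl fun a _ => by rw [← Matrix.conjTranspose_apply, hermAB]
  have hKc : ((K : ℂ))⁻¹ = (((K : ℝ)⁻¹ : ℝ) : ℂ) := by push_cast; ring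
  have hLc : ((L : ℂ))⁻¹ = (((L : ℝ)⁻¹ : ℝ) : ℂ) := by push_cast; ring
  rw [hKc, hLc] at hmaj
  have hermMK := kron_isHermitian' (smul_one_isHermitian' (m := Fin K) ((K : ℝ)⁻¹)) hermB
  have hermML := kron_isHermitian' (smul_one_isHermitian' (m := Fin L) ((L : ℝ)⁻¹)) hermAB
  have hABpos : 0 < maxEig ψAB := by
    apply maxEig_pos_of_trace' hermAB
    have h := congrArg Complex.re hψ1
    rw [Matrix.trace] at h
    simpa [Matrix.diag, Complex.re_sum] using h
  have hBpos : 0 < maxEig ψB := by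
    apply maxEig_pos_of_trace' hermB
    have h := congrArg Complex.re hψ1
    rw [Matrix.trace] at h
    have h2 : ∑ b : Bt, (ψB b b).re = ∑ p : At × Bt, (ψAB p p).re := by
      simp only [hψBdef, Matrix.of_apply, Complex.re_sum]
      rw [Fintype.sum_prod_type]
      exact Finset.sum_comm
    rw [h2]
    simpa [Matrix.diag, Complex.re_sum] using h
  have hLinv : (0 : ℝ) ≤ (L : ℝ)⁻¹ := by positivity
  have step1 : (K : ℝ)⁻¹ * maxEig ψB
      ≤ maxEig (((((K : ℝ)⁻¹ : ℝ) : ℂ) • (1 : Matrix (Fin K) (Fin K) ℂ)) ⊗ₖ ψB) :=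
    le_maxEig_kron' _ hermB hermMK
  have step2 := hmaj.1 1
  rw [topSum_one_eq_maxEig' hermMK, topSum_one_eq_maxEig' hermML] at step2
  have step3 : maxEig (((((L : ℝ)⁻¹ : ℝ) : ℂ) • (1 : Matrix (Fin L) (Fin L) ℂ)) ⊗ₖ ψAB)
      ≤ (L : ℝ)⁻¹ * maxEig ψAB := maxEig_kron_le' _ hLinv hermAB hermML
  have key : (K : ℝ)⁻¹ * maxEig ψB ≤ (L : ℝ)⁻¹ * maxEig ψAB :=
    le_trans step1 (le_trans step2 step3)
  have hK' : (0 : ℝ) < K := by exact_mod_cast hK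
  have hL' : (0 : ℝ) < L := by exact_mod_cast hL
  have hmul : (L : ℝ) * maxEig ψB ≤ (K : ℝ) * maxEig ψAB := by
    rw [inv_mul_eq_div, inv_mul_eq_div, div_le_div_iff₀ hK' hL'] at key
    linarith
  have hlog : Real.logb 2 ((L : ℝ) * maxEig ψB) ≤ Real.logb 2 ((K : ℝ) * maxEig ψAB) :=
    Real.logb_le_logb_of_le one_lt_two (by positivity) hmul
  rw [Real.logb_mul (ne_of_gt hL') (ne_of_gt hBpos),
    Real.logb_mul (ne_of_gt hK') (ne_of_gt hABpos)] at hlog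
  rw [ge_iff_le, Real.logb_inv, Real.logb_inv]
  linarith
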